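/- Let H be a finite group and let G = H ≀ ℤ be the restricted wreath product of H with ℤ. Then for all x, y ∈ G, the commutator ⁅x, y⁆ raised to the power |H| (the cardinality of H) equals the identity. In particular G satisfies a non-trivial law. -/

import Mathlib

/-- The restricted direct product `Π₀ i : ℤ, H`: the subgroup of `ℤ → H`
consisting of the finitely supported functions (pointwise multiplication). -/
def RestrictedProductZ (H : Type*) [Group H] : Subgroup (ℤ → H) where
  carrier := {f | (Function.mulSupport f).Finite}
  one_mem' := by simp [Function.mulSupport_one]
  mul_mem' := by
    intro f g hf hg
    exact ((hf.union hg).subset (Function.mulSupport_mul f g))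
  inv_mem' := by
    intro f hf
    simpa [Function.mulSupport_inv] using hf

/-- The shift automorphism of the restricted product: `(n • f) i = f (i - n)`. -/
def shiftAut (H : Type*) [Group H] (n : ℤ) : MulAut (RestrictedProductZ H) where
  toFun f := ⟨fun i => (f : ℤ → H) (i - n), by
    refine (f.2.image (· + n)).subset ?_
    intro i hi
    exact ⟨i - n, hi, by ring⟩⟩
  invFun f := ⟨fun i => (f : ℤ → H) (i + n), by
    refine (f.2.image (· - n)).subset ?_
    intro i hi
    exact ⟨i + n, hi, by ring⟩⟩
  left_inv f := by ext i; simp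
  right_inv f := by ext i; simp
  map_mul' f g := by ext i; rfl

/-- The action of `ℤ` (as `Multiplicative ℤ`) on the restricted product by shift
automorphisms. -/
def shiftHom (H : Type*) [Group H] :
    Multiplicative ℤ →* MulAut (RestrictedProductZ H) where
  toFun n := shiftAut H n.toAdd
  map_one' := by
    ext f i
    show (f : ℤ → H) (i - 0) = (f : ℤ → H) i
    rw [sub_zero]
  map_mul' m n := by
    ext f i
    show (f : ℤ → H) (i - (m.toAdd + n.toAdd)) = (f : ℤ → H) (i - m.toAdd - n.toAdd)
    rw [sub_sub]

/-- The restricted wreath product `H ≀ ℤ`, as the semidirect product of the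
restricted direct product `Π₀ i : ℤ, H` with `ℤ` acting by shifts. -/
abbrev WreathProductZ (H : Type*) [Group H] :=
  RestrictedProductZ H ⋊[shiftHom H] Multiplicative ℤ

open scoped commutatorElement

/-- For a finite group `H`, the restricted wreath product `H ≀ ℤ` satisfies the law
`⁅x, y⁆ ^ |H| = 1`. -/
theorem wreath_product_commutator_law (H : Type*) [Group H] [Finite H]
    (x y : WreathProductZ H) : ⁅x, y⁆ ^ (Nat.card H) = 1 := by
  set c := ⁅x, y⁆ with hc
  have hr : c.right = 1 := by
    have : c.right = ⁅x.right, y.right⁆ := by simp [hc, commutatorElement_def]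
    rw [this]
    exact commutatorElement_eq_one_iff_commute.mpr (mul_comm _ _)
  have hcl : c = SemidirectProduct.inl c.left := by
    conv_lhs => rw [← SemidirectProduct.inl_left_mul_inr_right c]
    rw [hr, map_one, mul_one]
  rw [hcl, ← map_pow]
  have : c.left ^ Nat.card H = 1 := by
    ext i
    show ((c.left : ℤ → H) ^ Nat.card H) i = 1
    simp [pow_card_eq_one']
  rw [this, map_one]
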